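/- Let a,b,c,p,q,r ∈ ℝ and let [·,·] be the unique antisymmetric bilinear bracket on ℝ⁶ with basis e₁,…,e₆ determined by: [e₃,e₅] = −a e₁ − q e₂; [e₃,e₆] = [e₄,e₅] = −c e₁ − r e₂; [e₄,e₆] = −b e₁ − p e₂; [e₁,e₅] = a e₃ + q e₄; [e₁,e₆] = [e₂,e₅] = c e₃ + r e₄; [e₂,e₆] = b e₃ + p e₄; [e₁,e₃] = −a e₅ − q e₆; [e₁,e₄] = [e₂,e₃] = −c e₅ − r e₆; [e₂,e₄] = −b e₅ − p e₆; [e₁,e₂] = [e₃,e₄] = [e₅,e₆] = 0. Then [·,·] satisfies the Jacobi identity if and only if bq − cr = 0, ab − br − c² + cp = 0 and ar − cq + pq − r² = 0, and this holds if and only if the 2×3 real matrix with rows (a−r, c, q) and (c−p, b, r) has rank at most 1. -/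

import Mathlib

noncomputable section

/-- `Wpair i j v w = vᵢwⱼ − vⱼwᵢ`, the evaluation of `eⁱ∧eʲ` on `(v,w)`. -/
def Wpair (i j : Fin 6) (v w : Fin 6 → ℝ) : ℝ := v i * w j - v j * w i

/-- The unique antisymmetric bilinear bracket on `ℝ⁶` with the basis brackets
`[e₃,e₅] = −a e₁ − q e₂`, `[e₃,e₆] = [e₄,e₅] = −c e₁ − r e₂`, `[e₄,e₆] = −b e₁ − p e₂`,
`[e₁,e₅] = a e₃ + q e₄`, `[e₁,e₆] = [e₂,e₅] = c e₃ + r e₄`, `[e₂,e₆] = b e₃ + p e₄`,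
`[e₁,e₃] = −a e₅ − q e₆`, `[e₁,e₄] = [e₂,e₃] = −c e₅ − r e₆`, `[e₂,e₄] = −b e₅ − p e₆`,
`[e₁,e₂] = [e₃,e₄] = [e₅,e₆] = 0` (indices here are 1-based, the code is 0-based). -/
def brABC (a b c p q r : ℝ) (v w : Fin 6 → ℝ) : Fin 6 → ℝ :=
  ![-(a * Wpair 2 4 v w) - c * (Wpair 2 5 v w + Wpair 3 4 v w) - b * Wpair 3 5 v w,
    -(q * Wpair 2 4 v w) - r * (Wpair 2 5 v w + Wpair 3 4 v w) - p * Wpair 3 5 v w,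
    a * Wpair 0 4 v w + c * (Wpair 0 5 v w + Wpair 1 4 v w) + b * Wpair 1 5 v w,
    q * Wpair 0 4 v w + r * (Wpair 0 5 v w + Wpair 1 4 v w) + p * Wpair 1 5 v w,
    -(a * Wpair 0 2 v w) - c * (Wpair 0 3 v w + Wpair 1 2 v w) - b * Wpair 1 3 v w,
    -(q * Wpair 0 2 v w) - r * (Wpair 0 3 v w + Wpair 1 2 v w) - p * Wpair 1 3 v w]


private lemma cons_val_five {α : Type*} {m : ℕ} (x : α)
    (u : Fin (m + 5) → α) :
    Matrix.vecCons x u 5 =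
      Matrix.vecHead (Matrix.vecTail (Matrix.vecTail (Matrix.vecTail (Matrix.vecTail u)))) :=
  rfl

private lemma jacobi_of_rel (a b c p q r : ℝ)
    (h1 : b * q - c * r = 0) (h2 : a * b - b * r - c ^ 2 + c * p = 0)
    (h3 : a * r - c * q + p * q - r ^ 2 = 0) (u v w : Fin 6 → ℝ) :
    brABC a b c p q r (brABC a b c p q r u v) w +
      brABC a b c p q r (brABC a b c p q r v w) u +
      brABC a b c p q r (brABC a b c p q r w u) v = 0 := by
  funext i
  fin_cases i <;>
    simp [brABC, Wpair, cons_val_five]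
  · linear_combination (u 5 * v 4 * w 0 - u 5 * v 0 * w 4 - u 4 * v 5 * w 0 + u 4 * v 0 * w 5 + u 3 * v 2 * w 0 - u 3 * v 0 * w 2 - u 2 * v 3 * w 0 + u 2 * v 0 * w 3 + u 0 * v 5 * w 4 - u 0 * v 4 * w 5 + u 0 * v 3 * w 2 - u 0 * v 2 * w 3) * h1 + (-u 5 * v 4 * w 1 + u 5 * v 1 * w 4 + u 4 * v 5 * w 1 - u 4 * v 1 * w 5 - u 3 * v 2 * w 1 + u 3 * v 1 * w 2 + u 2 * v 3 * w 1 - u 2 * v 1 * w 3 - u 1 * v 5 * w 4 + u 1 * v 4 * w 5 - u 1 * v 3 * w 2 + u 1 * v 2 * w 3) * h2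
  · linear_combination (-u 5 * v 4 * w 1 + u 5 * v 1 * w 4 + u 4 * v 5 * w 1 - u 4 * v 1 * w 5 - u 3 * v 2 * w 1 + u 3 * v 1 * w 2 + u 2 * v 3 * w 1 - u 2 * v 1 * w 3 - u 1 * v 5 * w 4 + u 1 * v 4 * w 5 - u 1 * v 3 * w 2 + u 1 * v 2 * w 3) * h1 + (u 5 * v 4 * w 0 - u 5 * v 0 * w 4 - u 4 * v 5 * w 0 + u 4 * v 0 * w 5 + u 3 * v 2 * w 0 - u 3 * v 0 * w 2 - u 2 * v 3 * w 0 + u 2 * v 0 * w 3 + u 0 * v 5 * w 4 - u 0 * v 4 * w 5 + u 0 * v 3 * w 2 - u 0 * v 2 * w 3) * h3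
  · linear_combination (u 5 * v 4 * w 2 - u 5 * v 2 * w 4 - u 4 * v 5 * w 2 + u 4 * v 2 * w 5 + u 2 * v 5 * w 4 - u 2 * v 4 * w 5 + u 2 * v 1 * w 0 - u 2 * v 0 * w 1 - u 1 * v 2 * w 0 + u 1 * v 0 * w 2 + u 0 * v 2 * w 1 - u 0 * v 1 * w 2) * h1 + (-u 5 * v 4 * w 3 + u 5 * v 3 * w 4 + u 4 * v 5 * w 3 - u 4 * v 3 * w 5 - u 3 * v 5 * w 4 + u 3 * v 4 * w 5 - u 3 * v 1 * w 0 + u 3 * v 0 * w 1 + u 1 * v 3 * w 0 - u 1 * v 0 * w 3 - u 0 * v 3 * w 1 + u 0 * v 1 * w 3) * h2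
  · linear_combination (-u 5 * v 4 * w 3 + u 5 * v 3 * w 4 + u 4 * v 5 * w 3 - u 4 * v 3 * w 5 - u 3 * v 5 * w 4 + u 3 * v 4 * w 5 - u 3 * v 1 * w 0 + u 3 * v 0 * w 1 + u 1 * v 3 * w 0 - u 1 * v 0 * w 3 - u 0 * v 3 * w 1 + u 0 * v 1 * w 3) * h1 + (u 5 * v 4 * w 2 - u 5 * v 2 * w 4 - u 4 * v 5 * w 2 + u 4 * v 2 * w 5 + u 2 * v 5 * w 4 - u 2 * v 4 * w 5 + u 2 * v 1 * w 0 - u 2 * v 0 * w 1 - u 1 * v 2 * w 0 + u 1 * v 0 * w 2 + u 0 * v 2 * w 1 - u 0 * v 1 * w 2) * h3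
  · linear_combination (u 4 * v 3 * w 2 - u 4 * v 2 * w 3 + u 4 * v 1 * w 0 - u 4 * v 0 * w 1 - u 3 * v 4 * w 2 + u 3 * v 2 * w 4 + u 2 * v 4 * w 3 - u 2 * v 3 * w 4 - u 1 * v 4 * w 0 + u 1 * v 0 * w 4 + u 0 * v 4 * w 1 - u 0 * v 1 * w 4) * h1 + (-u 5 * v 3 * w 2 + u 5 * v 2 * w 3 - u 5 * v 1 * w 0 + u 5 * v 0 * w 1 + u 3 * v 5 * w 2 - u 3 * v 2 * w 5 - u 2 * v 5 * w 3 + u 2 * v 3 * w 5 + u 1 * v 5 * w 0 - u 1 * v 0 * w 5 - u 0 * v 5 * w 1 + u 0 * v 1 * w 5) * h2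
  · linear_combination (-u 5 * v 3 * w 2 + u 5 * v 2 * w 3 - u 5 * v 1 * w 0 + u 5 * v 0 * w 1 + u 3 * v 5 * w 2 - u 3 * v 2 * w 5 - u 2 * v 5 * w 3 + u 2 * v 3 * w 5 + u 1 * v 5 * w 0 - u 1 * v 0 * w 5 - u 0 * v 5 * w 1 + u 0 * v 1 * w 5) * h1 + (u 4 * v 3 * w 2 - u 4 * v 2 * w 3 + u 4 * v 1 * w 0 - u 4 * v 0 * w 1 - u 3 * v 4 * w 2 + u 3 * v 2 * w 4 + u 2 * v 4 * w 3 - u 2 * v 3 * w 4 - u 1 * v 4 * w 0 + u 1 * v 0 * w 4 + u 0 * v 4 * w 1 - u 0 * v 1 * w 4) * h3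

private lemma two_le_rank_aux (M : Matrix (Fin 2) (Fin 3) ℝ) (i j : Fin 3)
    (h : M 0 i * M 1 j - M 0 j * M 1 i ≠ 0) : 2 ≤ M.rank := by
  classical
  set P : Matrix (Fin 3) (Fin 2) ℝ := Matrix.of fun k l => if k = ![i, j] l then (1 : ℝ) else 0
    with hP
  have hMP : ∀ (a : Fin 2) (l : Fin 2), (M * P) a l = M a (![i, j] l) := by
    intro a l
    simp [hP, Matrix.mul_apply, mul_ite]
  have hdet : (M * P).det ≠ 0 := by
    rw [Matrix.det_fin_two, hMP, hMP, hMP, hMP]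
    simpa using h
  have hunit : IsUnit (M * P) := (Matrix.isUnit_iff_isUnit_det _).2 (isUnit_iff_ne_zero.2 hdet)
  have h2 : (M * P).rank = 2 := Matrix.rank_of_isUnit _ hunit
  have hle := Matrix.rank_mul_le_left M P
  omega

private lemma rank_le_one_aux (x y z u v w : ℝ)
    (h1 : x * v - y * u = 0) (h2 : x * w - z * u = 0) (h3 : y * w - z * v = 0) :
    (!![x, y, z; u, v, w] : Matrix (Fin 2) (Fin 3) ℝ).rank ≤ 1 := by
  rw [Matrix.rank_eq_finrank_span_row]
  have hrange : Set.range (!![x, y, z; u, v, w] : Matrix (Fin 2) (Fin 3) ℝ) =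
      {![x, y, z], ![u, v, w]} := by
    rw [show (!![x, y, z; u, v, w] : Matrix (Fin 2) (Fin 3) ℝ) = ![![x, y, z], ![u, v, w]] from rfl]
    exact Matrix.range_cons_cons_empty _ _ _
  rw [show Set.range (!![x, y, z; u, v, w] : Matrix (Fin 2) (Fin 3) ℝ).row =
      {![x, y, z], ![u, v, w]} from hrange]
  by_cases h0 : (![x, y, z] : Fin 3 → ℝ) = 0
  · have hle : Submodule.span ℝ {![x, y, z], ![u, v, w]} ≤
        Submodule.span ℝ {(![u, v, w] : Fin 3 → ℝ)} := by
      rw [Submodule.span_le]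
      intro t ht
      rcases ht with ht | ht
      · rw [ht, h0]; exact Submodule.zero_mem _
      · rw [Set.mem_singleton_iff.mp ht]
        exact Submodule.subset_span rfl
    refine le_trans (Submodule.finrank_mono hle) ?_
    by_cases h1 : (![u, v, w] : Fin 3 → ℝ) = 0
    · rw [h1]
      rw [Submodule.span_zero_singleton]
      simp [finrank_bot]
    · rw [finrank_span_singleton h1]
  · have hprop : ∃ t : ℝ, (![u, v, w] : Fin 3 → ℝ) = t • ![x, y, z] := by
      have hx : x ≠ 0 ∨ y ≠ 0 ∨ z ≠ 0 := by
        by_contra hc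
        push_neg at hc
        apply h0
        funext i
        fin_cases i <;> simp [hc.1, hc.2.1, hc.2.2]
      rcases hx with hx | hy | hz
      · refine ⟨u / x, ?_⟩
        funext i
        fin_cases i <;> simp <;> field_simp <;> linarith
      · refine ⟨v / y, ?_⟩
        funext i
        fin_cases i <;> simp <;> field_simp <;> linarith
      · refine ⟨w / z, ?_⟩
        funext i
        fin_cases i <;> simp <;> field_simp <;> linarith
    obtain ⟨t, ht⟩ := hprop
    have hle : Submodule.span ℝ {![x, y, z], ![u, v, w]} ≤
        Submodule.span ℝ {(![x, y, z] : Fin 3 → ℝ)} := by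
      rw [Submodule.span_le]
      intro s hs
      rcases hs with hs | hs
      · rw [hs]; exact Submodule.subset_span rfl
      · rw [Set.mem_singleton_iff.mp hs, ht]
        exact Submodule.smul_mem _ _ (Submodule.subset_span rfl)
    refine le_trans (Submodule.finrank_mono hle) ?_
    rw [finrank_span_singleton h0]

set_option maxHeartbeats 1000000 in
theorem stmt1 (a b c p q r : ℝ) :
    ((∀ u v w : Fin 6 → ℝ,
        brABC a b c p q r (brABC a b c p q r u v) w +
          brABC a b c p q r (brABC a b c p q r v w) u +
          brABC a b c p q r (brABC a b c p q r w u) v = 0) ↔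
      (b * q - c * r = 0 ∧ a * b - b * r - c ^ 2 + c * p = 0 ∧
        a * r - c * q + p * q - r ^ 2 = 0)) ∧
    ((b * q - c * r = 0 ∧ a * b - b * r - c ^ 2 + c * p = 0 ∧
        a * r - c * q + p * q - r ^ 2 = 0) ↔
      (!![a - r, c, q; c - p, b, r] : Matrix (Fin 2) (Fin 3) ℝ).rank ≤ 1) := by
  constructor
  · constructor
    · intro hJ
      have k1 := congrFun (hJ ![0,0,0,0,0,1] ![0,0,0,0,1,0] ![1,0,0,0,0,0]) 0
      have k3 := congrFun (hJ ![0,0,0,0,0,1] ![0,0,0,0,1,0] ![1,0,0,0,0,0]) 1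
      have k2 := congrFun (hJ ![0,0,0,0,0,1] ![0,0,0,0,1,0] ![0,1,0,0,0,0]) 0
      simp [brABC, Wpair, cons_val_five] at k1 k2 k3
      refine ⟨by nlinarith [k1], by nlinarith [k2], by nlinarith [k3]⟩
    · rintro ⟨h1, h2, h3⟩ u v w
      exact jacobi_of_rel a b c p q r h1 h2 h3 u v w
  · constructor
    · rintro ⟨h1, h2, h3⟩
      apply rank_le_one_aux
      · linarith
      · nlinarith [h2]
      · nlinarith [h3]
    · intro hrank
      set M : Matrix (Fin 2) (Fin 3) ℝ := !![a - r, c, q; c - p, b, r] with hM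
      have e00 : M 0 0 = a - r := by simp [hM]
      have e01 : M 0 1 = c := by simp [hM]
      have e02 : M 0 2 = q := by simp [hM]
      have e10 : M 1 0 = c - p := by simp [hM]
      have e11 : M 1 1 = b := by simp [hM]
      have e12 : M 1 2 = r := by simp [hM]
      refine ⟨?_, ?_, ?_⟩
      · by_contra hne
        have := two_le_rank_aux M 2 1 (by rw [e02, e11, e01, e12]; intro h; apply hne; linarith)
        omega
      · by_contra hne
        have := two_le_rank_aux M 0 1 (by rw [e00, e11, e01, e10]; intro h; apply hne; nlinarith [h])
        omega
      · by_contra hne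
        have := two_le_rank_aux M 0 2 (by rw [e00, e12, e02, e10]; intro h; apply hne; nlinarith [h])
        omega
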